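/- Let r ≥ 1, C_A ≥ 1, and suppose A = S J S⁻¹ where S is an invertible complex d×d matrix with ‖S‖₂·‖S⁻¹‖₂ ≤ C_A and J is block-diagonal with Jordan blocks λI_k + N_k (N_k having ones on the superdiagonal and zeros elsewhere) of size k ≤ r and with |λ| ≤ 1 for every block. Then for every k ≥ 1, ‖A^k‖₂ ≤ C(k+r, r−1)·C_A, and for every k ≥ 0, Σ_{s=0}^{k} ‖A^s‖₂ ≤ C(k+r+1, r)·C_A, where C(n, j) denotes the binomial coefficient. -/

import Mathlib

open scoped BigOperators
open Finset

noncomputable def euclNorm {k : ℕ} (x : Fin k → ℝ) : ℝ := Real.sqrt (∑ i, x i ^ 2)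

noncomputable def frobNorm {n m : ℕ} (A : Matrix (Fin n) (Fin m) ℝ) : ℝ :=
  Real.sqrt (∑ i, ∑ j, A i j ^ 2)

noncomputable def spec2Norm {n m : ℕ} (A : Matrix (Fin n) (Fin m) ℝ) : ℝ :=
  sSup ((fun x => euclNorm (A.mulVec x)) '' {x | euclNorm x ≤ 1})

noncomputable def ceuclNorm {k : ℕ} (x : Fin k → ℂ) : ℝ := Real.sqrt (∑ i, ‖x i‖ ^ 2)

noncomputable def cSpec2Norm {n m : ℕ} (A : Matrix (Fin n) (Fin m) ℂ) : ℝ :=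
  sSup ((fun x => ceuclNorm (A.mulVec x)) '' {x | ceuclNorm x ≤ 1})

/-- `J` is a Jordan-form matrix whose blocks `λ Iₖ + Nₖ` have size `k ≤ r` and whose
eigenvalues have modulus at most `1`. -/
def IsJordanForm {d : ℕ} (J : Matrix (Fin d) (Fin d) ℂ) (r : ℕ) : Prop :=
  (∀ i, ‖J i i‖ ≤ 1) ∧
  (∀ i j : Fin d, (j : ℕ) ≠ (i : ℕ) → (j : ℕ) ≠ (i : ℕ) + 1 → J i j = 0) ∧
  (∀ i j : Fin d, (j : ℕ) = (i : ℕ) + 1 → J i j = 0 ∨ (J i j = 1 ∧ J i i = J j j)) ∧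
  (∀ i : ℕ, ∀ _ : i + r < d, ∃ k, ∃ _ : k < r,
      J ⟨i + k, by omega⟩ ⟨i + k + 1, by omega⟩ = 0)

lemma ceuclNorm_eq {n : ℕ} (x : Fin n → ℂ) :
    ceuclNorm x = ‖((WithLp.linearEquiv 2 ℂ (Fin n → ℂ)).symm x : EuclideanSpace ℂ (Fin n))‖ := by
  rw [EuclideanSpace.norm_eq]
  simp [ceuclNorm]

lemma ceuclNorm_nonneg {n : ℕ} (x : Fin n → ℂ) : 0 ≤ ceuclNorm x := Real.sqrt_nonneg _

lemma ceuclNorm_sum_le {n : ℕ} {ι : Type*} (s : Finset ι) (y : ι → Fin n → ℂ) :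
    ceuclNorm (∑ t ∈ s, y t) ≤ ∑ t ∈ s, ceuclNorm (y t) := by
  simp only [ceuclNorm_eq, map_sum]
  exact norm_sum_le _ _

lemma ceuclNorm_smul {n : ℕ} (c : ℝ) (hc : 0 ≤ c) (x : Fin n → ℂ) :
    ceuclNorm (fun i => (c : ℂ) * x i) = c * ceuclNorm x := by
  have : (fun i => (c : ℂ) * x i) = (c : ℂ) • x := rfl
  rw [this, ceuclNorm_eq, ceuclNorm_eq, map_smul, norm_smul]
  simp [Real.norm_eq_abs, abs_of_nonneg hc]

lemma abs_entry_le_ceuclNorm {n : ℕ} (x : Fin n → ℂ) (j : Fin n) :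
    ‖x j‖ ≤ ceuclNorm x := by
  have h1 : ‖x j‖ ^ 2 ≤ ∑ i, ‖x i‖ ^ 2 :=
    Finset.single_le_sum (f := fun i => ‖x i‖ ^ 2) (fun i _ => sq_nonneg _) (mem_univ j)
  calc ‖x j‖ = Real.sqrt (‖x j‖ ^ 2) :=
        (Real.sqrt_sq (norm_nonneg _)).symm
    _ ≤ ceuclNorm x := Real.sqrt_le_sqrt h1

lemma ceuclNorm_eq_zero {n : ℕ} {x : Fin n → ℂ} (h : ceuclNorm x = 0) : x = 0 := by
  funext j
  have := abs_entry_le_ceuclNorm x j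
  rw [h] at this
  have := le_antisymm this (norm_nonneg _)
  simpa using this

-- crude elementwise bound
lemma ceuclNorm_le_sum_abs {n : ℕ} (y : Fin n → ℂ) :
    ceuclNorm y ≤ ∑ i, ‖y i‖ := by
  have h : ∑ i, ‖y i‖ ^ 2 ≤ (∑ i, ‖y i‖) ^ 2 :=
    Finset.sum_sq_le_sq_sum_of_nonneg (fun i _ => norm_nonneg _)
  calc ceuclNorm y ≤ Real.sqrt ((∑ i, ‖y i‖) ^ 2) := Real.sqrt_le_sqrt h
    _ = _ := Real.sqrt_sq (Finset.sum_nonneg fun i _ => norm_nonneg _)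

lemma mulVec_crude {n m : ℕ} (A : Matrix (Fin n) (Fin m) ℂ) (x : Fin m → ℂ) :
    ceuclNorm (A.mulVec x) ≤ (∑ i, ∑ j, ‖A i j‖) * ceuclNorm x := by
  calc ceuclNorm (A.mulVec x) ≤ ∑ i, ‖A.mulVec x i‖ := ceuclNorm_le_sum_abs _
    _ ≤ ∑ i, ∑ j, ‖A i j‖ * ceuclNorm x := by
        apply Finset.sum_le_sum
        intro i _
        calc ‖A.mulVec x i‖ = ‖∑ j, A i j * x j‖ := by
              simp [Matrix.mulVec, dotProduct]
          _ ≤ ∑ j, ‖A i j * x j‖ := norm_sum_le _ _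
          _ ≤ ∑ j, ‖A i j‖ * ceuclNorm x := by
              apply Finset.sum_le_sum
              intro j _
              rw [norm_mul]
              exact mul_le_mul_of_nonneg_left (abs_entry_le_ceuclNorm x j) (norm_nonneg _)
    _ = (∑ i, ∑ j, ‖A i j‖) * ceuclNorm x := by rw [Finset.sum_mul]; congr 1; ext i; rw [Finset.sum_mul]

lemma bddAbove_cset {n m : ℕ} (A : Matrix (Fin n) (Fin m) ℂ) :
    BddAbove ((fun x => ceuclNorm (A.mulVec x)) '' {x | ceuclNorm x ≤ 1}) := by
  refine ⟨∑ i, ∑ j, ‖A i j‖, ?_⟩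
  rintro y ⟨x, hx, rfl⟩
  calc ceuclNorm (A.mulVec x) ≤ (∑ i, ∑ j, ‖A i j‖) * ceuclNorm x := mulVec_crude A x
    _ ≤ (∑ i, ∑ j, ‖A i j‖) * 1 := by
        apply mul_le_mul_of_nonneg_left hx
        exact Finset.sum_nonneg fun i _ => Finset.sum_nonneg fun j _ => norm_nonneg _
    _ = _ := mul_one _

lemma cSpec2Norm_nonneg {n m : ℕ} (A : Matrix (Fin n) (Fin m) ℂ) : 0 ≤ cSpec2Norm A :=
  Real.sSup_nonneg fun y ⟨x, _, hy⟩ => hy ▸ ceuclNorm_nonneg _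

lemma cSpec2Norm_le {n m : ℕ} {A : Matrix (Fin n) (Fin m) ℂ} {c : ℝ} (hc : 0 ≤ c)
    (h : ∀ x, ceuclNorm x ≤ 1 → ceuclNorm (A.mulVec x) ≤ c) : cSpec2Norm A ≤ c := by
  apply Real.sSup_le _ hc
  rintro y ⟨x, hx, rfl⟩
  exact h x hx

lemma ceuclNorm_mulVec_le {n m : ℕ} (A : Matrix (Fin n) (Fin m) ℂ) (x : Fin m → ℂ) :
    ceuclNorm (A.mulVec x) ≤ cSpec2Norm A * ceuclNorm x := by
  rcases eq_or_ne (ceuclNorm x) 0 with h0 | h0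
  · have hx0 : x = 0 := ceuclNorm_eq_zero h0
    subst hx0
    rw [h0, mul_zero, Matrix.mulVec_zero]
    simp [ceuclNorm]
  · have hpos : 0 < ceuclNorm x := lt_of_le_of_ne (ceuclNorm_nonneg x) (Ne.symm h0)
    set c := ceuclNorm x with hc
    set x' : Fin m → ℂ := fun i => ((c⁻¹ : ℝ) : ℂ) * x i with hx'
    have hnx' : ceuclNorm x' = 1 := by
      rw [hx', ceuclNorm_smul _ (inv_nonneg.mpr hpos.le)]
      field_simp
      exact hc.symm
    have hmem : ceuclNorm (A.mulVec x') ∈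
        ((fun x => ceuclNorm (A.mulVec x)) '' {x | ceuclNorm x ≤ 1}) :=
      ⟨x', by rw [Set.mem_setOf_eq, hnx'], rfl⟩
    have hle : ceuclNorm (A.mulVec x') ≤ cSpec2Norm A := le_csSup (bddAbove_cset A) hmem
    have hmv : A.mulVec x' = fun i => ((c⁻¹ : ℝ) : ℂ) * (A.mulVec x) i := by
      funext i
      simp only [hx', Matrix.mulVec, dotProduct, Finset.mul_sum]
      congr 1; funext j; ring
    rw [hmv, ceuclNorm_smul _ (inv_nonneg.mpr hpos.le)] at hle
    calc ceuclNorm (A.mulVec x) = c * (c⁻¹ * ceuclNorm (A.mulVec x)) := by field_simp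
      _ ≤ c * cSpec2Norm A := mul_le_mul_of_nonneg_left hle hpos.le
      _ = cSpec2Norm A * c := mul_comm _ _

lemma cSpec2Norm_mul_le {n m p : ℕ} (A : Matrix (Fin n) (Fin m) ℂ) (B : Matrix (Fin m) (Fin p) ℂ) :
    cSpec2Norm (A * B) ≤ cSpec2Norm A * cSpec2Norm B := by
  apply cSpec2Norm_le (mul_nonneg (cSpec2Norm_nonneg A) (cSpec2Norm_nonneg B))
  intro x hx
  rw [← Matrix.mulVec_mulVec]
  calc ceuclNorm (A.mulVec (B.mulVec x)) ≤ cSpec2Norm A * ceuclNorm (B.mulVec x) :=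
        ceuclNorm_mulVec_le A _
    _ ≤ cSpec2Norm A * (cSpec2Norm B * ceuclNorm x) :=
        mul_le_mul_of_nonneg_left (ceuclNorm_mulVec_le B x) (cSpec2Norm_nonneg A)
    _ ≤ cSpec2Norm A * (cSpec2Norm B * 1) := by
        apply mul_le_mul_of_nonneg_left _ (cSpec2Norm_nonneg A)
        exact mul_le_mul_of_nonneg_left hx (cSpec2Norm_nonneg B)
    _ = cSpec2Norm A * cSpec2Norm B := by ring

lemma cSpec2Norm_sum_le {n m : ℕ} {ι : Type} (s : Finset ι) (M : ι → Matrix (Fin n) (Fin m) ℂ) :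
    cSpec2Norm (∑ t ∈ s, M t) ≤ ∑ t ∈ s, cSpec2Norm (M t) := by
  apply cSpec2Norm_le (Finset.sum_nonneg fun t _ => cSpec2Norm_nonneg _)
  intro x hx
  have hmv : (∑ t ∈ s, M t).mulVec x = ∑ t ∈ s, (M t).mulVec x := by
    funext i
    simp only [Matrix.mulVec, dotProduct, Finset.sum_apply, Matrix.sum_apply,
      Finset.sum_mul]
    rw [Finset.sum_comm]
  rw [hmv]
  calc ceuclNorm (∑ t ∈ s, (M t).mulVec x) ≤ ∑ t ∈ s, ceuclNorm ((M t).mulVec x) :=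
        ceuclNorm_sum_le s _
    _ ≤ ∑ t ∈ s, cSpec2Norm (M t) * ceuclNorm x :=
        Finset.sum_le_sum fun t _ => ceuclNorm_mulVec_le _ _
    _ ≤ ∑ t ∈ s, cSpec2Norm (M t) * 1 :=
        Finset.sum_le_sum fun t _ => mul_le_mul_of_nonneg_left hx (cSpec2Norm_nonneg _)
    _ = _ := by simp

lemma mulVec_apply' {n m : ℕ} (A : Matrix (Fin n) (Fin m) ℂ) (x : Fin m → ℂ) (i : Fin n) :
    A.mulVec x i = ∑ j : Fin m, A i j * x j := rfl

/-- norm bound for a matrix supported on a single (t-th) superdiagonal. -/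
lemma diag_norm_le {d : ℕ} (M : Matrix (Fin d) (Fin d) ℂ) (t : ℕ) (c : ℝ) (hc : 0 ≤ c)
    (hsupp : ∀ i j : Fin d, (j : ℕ) ≠ (i : ℕ) + t → M i j = 0)
    (hbnd : ∀ i j : Fin d, ‖M i j‖ ≤ c) :
    cSpec2Norm M ≤ c := by
  apply cSpec2Norm_le hc
  intro x hx
  have hrow : ∀ i : Fin d, ‖M.mulVec x i‖ ^ 2 ≤
      c ^ 2 * ∑ j : Fin d, (if (j : ℕ) = (i : ℕ) + t then ‖x j‖ ^ 2 else 0) := by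
    intro i
    by_cases h : (i : ℕ) + t < d
    · set j₀ : Fin d := ⟨(i : ℕ) + t, h⟩ with hj₀
      have h1 : M.mulVec x i = M i j₀ * x j₀ := by
        rw [mulVec_apply']
        apply Finset.sum_eq_single_of_mem j₀ (mem_univ _)
        intro j _ hj
        have hne : (j : ℕ) ≠ (i : ℕ) + t := fun hh => hj (Fin.ext hh)
        rw [hsupp i j hne, zero_mul]
      have h2 : (∑ j : Fin d, (if (j : ℕ) = (i : ℕ) + t then ‖x j‖ ^ 2 else 0))
          = ‖x j₀‖ ^ 2 := by
        rw [Finset.sum_eq_single_of_mem j₀ (mem_univ _)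
          (fun j _ hj => if_neg (fun hh => hj (Fin.ext hh)))]
        exact if_pos rfl
      rw [h1, h2, norm_mul, mul_pow]
      apply mul_le_mul_of_nonneg_right _ (sq_nonneg _)
      exact pow_le_pow_left₀ (norm_nonneg _) (hbnd i j₀) 2
    · have h1 : M.mulVec x i = 0 := by
        rw [mulVec_apply']
        apply Finset.sum_eq_zero
        intro j _
        have hne : (j : ℕ) ≠ (i : ℕ) + t := by omega
        rw [hsupp i j hne, zero_mul]
      rw [h1, norm_zero]
      have : (0:ℝ) ≤ c ^ 2 * ∑ j : Fin d,
          (if (j : ℕ) = (i : ℕ) + t then ‖x j‖ ^ 2 else 0) := by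
        apply mul_nonneg (sq_nonneg c)
        apply Finset.sum_nonneg
        intro j _
        split <;> [exact sq_nonneg _; exact le_refl 0]
      simpa using this
  have hcol : ∀ j : Fin d,
      (∑ i : Fin d, if (j : ℕ) = (i : ℕ) + t then ‖x j‖ ^ 2 else 0)
        ≤ ‖x j‖ ^ 2 := by
    intro j
    have hcard : (univ.filter (fun i : Fin d => (j : ℕ) = (i : ℕ) + t)).card ≤ 1 := by
      apply Finset.card_le_one.mpr
      intro a ha b hb
      simp only [mem_filter] at ha hb
      exact Fin.ext (by omega)
    calc (∑ i : Fin d, if (j : ℕ) = (i : ℕ) + t then ‖x j‖ ^ 2 else 0)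
        = ∑ _i ∈ univ.filter (fun i : Fin d => (j : ℕ) = (i : ℕ) + t),
            ‖x j‖ ^ 2 := (Finset.sum_filter _ _).symm
      _ = (univ.filter (fun i : Fin d => (j : ℕ) = (i : ℕ) + t)).card •
            ‖x j‖ ^ 2 := Finset.sum_const _
      _ ≤ 1 * ‖x j‖ ^ 2 := by
          rw [nsmul_eq_mul]
          exact mul_le_mul_of_nonneg_right (by exact_mod_cast hcard) (sq_nonneg _)
      _ = _ := one_mul _
  have hsq : ∑ i, ‖M.mulVec x i‖ ^ 2 ≤ c ^ 2 * ∑ j, ‖x j‖ ^ 2 := by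
    calc ∑ i, ‖M.mulVec x i‖ ^ 2
        ≤ ∑ i : Fin d, c ^ 2 * ∑ j : Fin d,
            (if (j : ℕ) = (i : ℕ) + t then ‖x j‖ ^ 2 else 0) :=
          Finset.sum_le_sum fun i _ => hrow i
      _ = c ^ 2 * ∑ j : Fin d, ∑ i : Fin d,
            (if (j : ℕ) = (i : ℕ) + t then ‖x j‖ ^ 2 else 0) := by
          rw [← Finset.mul_sum, Finset.sum_comm]
      _ ≤ c ^ 2 * ∑ j, ‖x j‖ ^ 2 :=
          mul_le_mul_of_nonneg_left (Finset.sum_le_sum fun j _ => hcol j) (sq_nonneg c)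
  have hkey : ceuclNorm (M.mulVec x) ≤ c * ceuclNorm x := by
    rw [ceuclNorm, ceuclNorm]
    calc Real.sqrt (∑ i, ‖M.mulVec x i‖ ^ 2)
        ≤ Real.sqrt (c ^ 2 * ∑ j, ‖x j‖ ^ 2) := Real.sqrt_le_sqrt hsq
      _ = c * Real.sqrt (∑ j, ‖x j‖ ^ 2) := by
          rw [Real.sqrt_mul (sq_nonneg c), Real.sqrt_sq hc]
  calc ceuclNorm (M.mulVec x) ≤ c * ceuclNorm x := hkey
    _ ≤ c * 1 := mul_le_mul_of_nonneg_left hx hc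
    _ = c := mul_one c

section JordanEntries
variable {d : ℕ} (J : Matrix (Fin d) (Fin d) ℂ)
variable (h2 : ∀ i j : Fin d, (j : ℕ) ≠ (i : ℕ) → (j : ℕ) ≠ (i : ℕ) + 1 → J i j = 0)

lemma mulVec_apply'' {n m : ℕ} (A : Matrix (Fin n) (Fin m) ℂ) (x : Fin m → ℂ) (i : Fin n) :
    A.mulVec x i = ∑ j : Fin m, A i j * x j := rfl

lemma pow_entry_apply (k : ℕ) (i j : Fin d) :
    (J ^ (k+1)) i j = ∑ l : Fin d, (J ^ k) i l * J l j := by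
  rw [pow_succ, Matrix.mul_apply]

include h2 in
lemma jordan_tri : ∀ k : ℕ, ∀ i j : Fin d, (j : ℕ) < (i : ℕ) → (J ^ k) i j = 0 := by
  intro k
  induction k with
  | zero =>
    intro i j hij
    rw [pow_zero]
    apply Matrix.one_apply_ne
    intro h
    exact absurd (congrArg Fin.val h) (by omega)
  | succ k ih =>
    intro i j hij
    rw [pow_entry_apply]
    apply Finset.sum_eq_zero
    intro l _
    by_cases hl : (j : ℕ) = (l : ℕ)
    · rw [ih i l (by omega), zero_mul]
    · by_cases hl' : (j : ℕ) = (l : ℕ) + 1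
      · rw [ih i l (by omega), zero_mul]
      · rw [h2 l j hl hl', mul_zero]

include h2 in
lemma jordan_break : ∀ k : ℕ, ∀ i j : Fin d, ∀ m : ℕ, ∀ hd1 : m + 1 < d,
    (i : ℕ) ≤ m → m < (j : ℕ) → J ⟨m, by omega⟩ ⟨m + 1, hd1⟩ = 0 → (J ^ k) i j = 0 := by
  intro k
  induction k with
  | zero =>
    intro i j m hd1 him hmj _
    rw [pow_zero]
    apply Matrix.one_apply_ne
    intro h
    exact absurd (congrArg Fin.val h) (by omega)
  | succ k ih =>
    intro i j m hd1 him hmj hbrk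
    rw [pow_entry_apply]
    apply Finset.sum_eq_zero
    intro l _
    by_cases hl : (j : ℕ) = (l : ℕ)
    · rw [ih i l m hd1 him (by omega) hbrk, zero_mul]
    · by_cases hl' : (j : ℕ) = (l : ℕ) + 1
      · by_cases hml : m = (l : ℕ)
        · have : J l j = 0 := by
            have e1 : l = (⟨m, by omega⟩ : Fin d) := Fin.ext (show (l : ℕ) = m by omega)
            have e2 : j = (⟨m + 1, hd1⟩ : Fin d) := Fin.ext (show (j : ℕ) = m + 1 by omega)
            rw [e1, e2]; exact hbrk
          rw [this, mul_zero]
        · rw [ih i l m hd1 him (by omega) hbrk, zero_mul]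
      · rw [h2 l j hl hl', mul_zero]

variable (h1 : ∀ i : Fin d, ‖J i i‖ ≤ 1)
variable (h3 : ∀ i j : Fin d, (j : ℕ) = (i : ℕ) + 1 → J i j = 0 ∨ (J i j = 1 ∧ J i i = J j j))

include h1 h2 h3 in
lemma jordan_abs_le_one : ∀ l j : Fin d, ‖J l j‖ ≤ 1 := by
  intro l j
  by_cases hl : (j : ℕ) = (l : ℕ)
  · have : j = l := Fin.ext hl
    subst this
    exact h1 j
  · by_cases hl' : (j : ℕ) = (l : ℕ) + 1
    · rcases h3 l j hl' with h | ⟨h, _⟩ <;> rw [h] <;> simp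
    · rw [h2 l j hl hl', norm_zero]
      exact zero_le_one

include h1 h2 h3 in
lemma jordan_pow_entry_bound : ∀ k : ℕ, ∀ i j : Fin d,
    ‖(J ^ k) i j‖ ≤ (Nat.choose k ((j : ℕ) - (i : ℕ)) : ℝ) := by
  intro k
  induction k with
  | zero =>
    intro i j
    rw [pow_zero]
    by_cases h : i = j
    · subst h
      simp [Matrix.one_apply_eq]
    · rw [Matrix.one_apply_ne h, norm_zero]
      exact Nat.cast_nonneg _
  | succ k ih =>
    intro i j
    by_cases hji : (j : ℕ) < (i : ℕ)
    · rw [jordan_tri J h2 (k+1) i j hji, norm_zero]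
      exact Nat.cast_nonneg _
    · rw [pow_entry_apply]
      have habs := jordan_abs_le_one J h2 h1 h3
      by_cases hji2 : (j : ℕ) = (i : ℕ)
      · -- diagonal case: single term l = j
        have hsum : (∑ l : Fin d, (J ^ k) i l * J l j) = (J ^ k) i j * J j j := by
          apply Finset.sum_eq_single_of_mem j (mem_univ _)
          intro l _ hlj
          by_cases hl : (j : ℕ) = (l : ℕ)
          · exact absurd (Fin.ext hl.symm) hlj
          · by_cases hl' : (j : ℕ) = (l : ℕ) + 1
            · rw [jordan_tri J h2 k i l (by omega), zero_mul]
            · rw [h2 l j hl hl', mul_zero]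
        rw [hsum, norm_mul]
        have e : (j : ℕ) - (i : ℕ) = 0 := by omega
        rw [e, Nat.choose_zero_right]
        calc ‖(J ^ k) i j‖ * ‖J j j‖
            ≤ 1 * 1 := by
              apply mul_le_mul _ (h1 j) (norm_nonneg _) zero_le_one
              have := ih i j
              rw [e, Nat.choose_zero_right] at this
              exact_mod_cast this
          _ = ((1:ℕ):ℝ) := by norm_num
      · -- i < j case
        have hij : (i : ℕ) < (j : ℕ) := by omega
        have hj1 : 1 ≤ (j : ℕ) := by omega
        set j' : Fin d := ⟨(j : ℕ) - 1, by omega⟩ with hj'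
        have hsum : (∑ l : Fin d, (J ^ k) i l * J l j)
            = ∑ l ∈ ({j', j} : Finset (Fin d)), (J ^ k) i l * J l j := by
          symm
          apply Finset.sum_subset (Finset.subset_univ _)
          intro l _ hl
          simp only [Finset.mem_insert, Finset.mem_singleton] at hl
          push_neg at hl
          obtain ⟨hlj', hlj⟩ := hl
          by_cases hc : (j : ℕ) = (l : ℕ)
          · exact absurd (Fin.ext hc.symm) hlj
          · by_cases hc' : (j : ℕ) = (l : ℕ) + 1
            · exact absurd (Fin.ext (by omega : (l : ℕ) = (j : ℕ) - 1)) hlj'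
            · rw [h2 l j hc hc', mul_zero]
        have hne : j' ≠ j := by
          intro h
          have := congrArg Fin.val h
          simp [hj'] at this
          omega
        rw [hsum, Finset.sum_pair hne]
        set t := (j : ℕ) - (i : ℕ) with ht
        have htpos : 1 ≤ t := by omega
        have e1 : (j' : ℕ) - (i : ℕ) = t - 1 := by simp [hj']; omega
        have e2 : Nat.choose (k+1) t = Nat.choose k (t-1) + Nat.choose k t := by
          obtain ⟨u, hu⟩ : ∃ u, t = u + 1 := ⟨t - 1, by omega⟩
          rw [hu]
          simp [Nat.choose_succ_succ]
        calc ‖(J ^ k) i j' * J j' j + (J ^ k) i j * J j j‖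
            ≤ ‖(J ^ k) i j' * J j' j‖ + ‖(J ^ k) i j * J j j‖ :=
              norm_add_le _ _
          _ ≤ (Nat.choose k (t-1) : ℝ) + (Nat.choose k t : ℝ) := by
              apply add_le_add
              · rw [norm_mul]
                calc ‖(J ^ k) i j'‖ * ‖J j' j‖
                    ≤ (Nat.choose k (t-1) : ℝ) * 1 := by
                      apply mul_le_mul _ (habs j' j) (norm_nonneg _) (Nat.cast_nonneg _)
                      have := ih i j'
                      rwa [e1] at this
                  _ = _ := mul_one _
              · rw [norm_mul]
                calc ‖(J ^ k) i j‖ * ‖J j j‖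
                    ≤ (Nat.choose k t : ℝ) * 1 := by
                      apply mul_le_mul _ (habs j j) (norm_nonneg _) (Nat.cast_nonneg _)
                      exact ih i j
                  _ = _ := mul_one _
          _ = (Nat.choose (k+1) t : ℝ) := by rw [e2]; push_cast; ring
end JordanEntries

-- Nat lemmas
lemma sum_choose_le_choose (k r : ℕ) (hr : 1 ≤ r) :
    ∑ t ∈ range r, Nat.choose k t ≤ Nat.choose (k + r) (r - 1) := by
  induction r with
  | zero => omega
  | succ r ih =>
    by_cases hr1 : 1 ≤ r
    · have h1 := ih hr1
      rw [Finset.sum_range_succ]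
      have e : Nat.choose (k + (r+1)) (r + 1 - 1) = Nat.choose (k + r) (r - 1) + Nat.choose (k + r) r := by
        obtain ⟨u, hu⟩ : ∃ u, r = u + 1 := ⟨r - 1, by omega⟩
        subst hu
        have : k + (u + 1 + 1) = (k + (u + 1)) + 1 := by ring
        rw [this]
        simp [Nat.choose_succ_succ]
      rw [e]
      have h2 : Nat.choose k r ≤ Nat.choose (k + r) r := Nat.choose_le_choose r (by omega)
      omega
    · have : r = 0 := by omega
      subst this
      simp
lemma sum_shift_choose_le (k r : ℕ) (hr : 1 ≤ r) :
    ∑ s ∈ range (k + 1), Nat.choose (s + r) (r - 1) ≤ Nat.choose (k + r + 1) r := by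
  induction k with
  | zero =>
    simp only [Finset.range_one, Finset.sum_singleton, Nat.zero_add]
    obtain ⟨u, hu⟩ : ∃ u, r = u + 1 := ⟨r - 1, by omega⟩
    subst hu
    simp only [Nat.add_sub_cancel, Nat.zero_add]
    rw [Nat.choose_succ_self_right, Nat.choose_succ_self_right]
    omega
  | succ k ih =>
    rw [Finset.sum_range_succ]
    have e : Nat.choose (k + 1 + r + 1) r = Nat.choose (k + r + 1) r + Nat.choose (k + r + 1) (r - 1) := by
      obtain ⟨u, hu⟩ : ∃ u, r = u + 1 := ⟨r - 1, by omega⟩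
      subst hu
      have : k + 1 + (u + 1) + 1 = (k + (u+1) + 1) + 1 := by ring
      rw [this, Nat.choose_succ_succ]
      simp
      omega
    have e2 : Nat.choose (k + 1 + r) (r - 1) ≤ Nat.choose (k + r + 1) (r - 1) :=
      Nat.choose_le_choose _ (by omega)
    omega

-- bridge: real spectral norm bounded by complex one of the complexification
lemma spec2Norm_le_cSpec2Norm {n m : ℕ} (A : Matrix (Fin n) (Fin m) ℝ) :
    spec2Norm A ≤ cSpec2Norm (A.map Complex.ofReal) := by
  apply Real.sSup_le _ (cSpec2Norm_nonneg _)
  rintro y ⟨x, hx, rfl⟩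
  simp only [Set.mem_setOf_eq] at hx
  set z : Fin m → ℂ := fun j => (x j : ℂ) with hz
  have hmv : (A.map Complex.ofReal).mulVec z = fun i => ((A.mulVec x i : ℝ) : ℂ) := by
    funext i
    show ∑ j : Fin m, (A i j : ℂ) * (x j : ℂ) = ((∑ j : Fin m, A i j * x j : ℝ) : ℂ)
    push_cast
    rfl
  have hceq : ∀ (w : Fin n → ℝ), ceuclNorm (fun i => ((w i : ℝ) : ℂ)) = euclNorm w := by
    intro w
    simp [ceuclNorm, euclNorm, Complex.norm_real, sq_abs]
  have hceq' : ∀ (w : Fin m → ℝ), ceuclNorm (fun i => ((w i : ℝ) : ℂ)) = euclNorm w := by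
    intro w
    simp [ceuclNorm, euclNorm, Complex.norm_real, sq_abs]
  calc euclNorm (A.mulVec x) = ceuclNorm ((A.map Complex.ofReal).mulVec z) := by
        rw [hmv, hceq]
    _ ≤ cSpec2Norm (A.map Complex.ofReal) * ceuclNorm z := ceuclNorm_mulVec_le _ _
    _ ≤ cSpec2Norm (A.map Complex.ofReal) * 1 := by
        apply mul_le_mul_of_nonneg_left _ (cSpec2Norm_nonneg _)
        rw [hz]
        rw [hceq' x]
        exact hx
    _ = _ := mul_one _

-- conjugation power
lemma conjPowEq {d : ℕ} (S J : Matrix (Fin d) (Fin d) ℂ) (hS : IsUnit S.det) (k : ℕ) :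
    (S * J * S⁻¹) ^ k = S * J ^ k * S⁻¹ := by
  induction k with
  | zero => simp [Matrix.mul_nonsing_inv S hS]
  | succ k ih =>
    rw [pow_succ, ih, pow_succ]
    have hinv : S⁻¹ * S = 1 := Matrix.nonsing_inv_mul S hS
    calc S * J ^ k * S⁻¹ * (S * J * S⁻¹) = S * J ^ k * (S⁻¹ * S) * J * S⁻¹ := by
          simp only [Matrix.mul_assoc]
      _ = S * (J ^ k * J) * S⁻¹ := by rw [hinv, Matrix.mul_one]; simp only [Matrix.mul_assoc]

-- map pow
lemma map_pow_ofReal {d : ℕ} (A : Matrix (Fin d) (Fin d) ℝ) (k : ℕ) :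
    (A ^ k).map Complex.ofReal = (A.map Complex.ofReal) ^ k := by
  have h0 : (Complex.ofReal : ℝ → ℂ) = ⇑Complex.ofRealHom := rfl
  rw [h0, ← RingHom.mapMatrix_apply, ← RingHom.mapMatrix_apply, map_pow]


lemma jordan_pow_norm_le {d r : ℕ} (hr : 1 ≤ r) (J : Matrix (Fin d) (Fin d) ℂ)
    (hJ : IsJordanForm J r) (k : ℕ) :
    cSpec2Norm (J ^ k) ≤ (Nat.choose (k + r) (r - 1) : ℝ) := by
  obtain ⟨h1, h2, h3, h4⟩ := hJ
  set Dm : ℕ → Matrix (Fin d) (Fin d) ℂ := fun t =>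
    Matrix.of fun i j => if (j : ℕ) = (i : ℕ) + t then (J ^ k) i j else 0 with hDm
  have hzero : ∀ i j : Fin d, ¬((i : ℕ) ≤ (j : ℕ) ∧ (j : ℕ) < (i : ℕ) + r) → (J ^ k) i j = 0 := by
    intro i j hc
    push_neg at hc
    by_cases hlt : (j : ℕ) < (i : ℕ)
    · exact jordan_tri J h2 k i j hlt
    · have hge : (i : ℕ) + r ≤ (j : ℕ) := hc (by omega)
      have hird : (i : ℕ) + r < d := by have := j.isLt; omega
      obtain ⟨k₀, hk₀, hbrk⟩ := h4 (i : ℕ) hird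
      exact jordan_break J h2 k i j ((i : ℕ) + k₀) (by omega) (by omega) (by omega) hbrk
  have hdec : J ^ k = ∑ t ∈ range r, Dm t := by
    ext i j
    rw [Matrix.sum_apply]
    by_cases hcase : (i : ℕ) ≤ (j : ℕ) ∧ (j : ℕ) < (i : ℕ) + r
    · rw [Finset.sum_eq_single_of_mem ((j : ℕ) - (i : ℕ)) (mem_range.mpr (by omega))]
      · simp only [hDm, Matrix.of_apply]
        rw [if_pos (by omega)]
      · intro t _ hne
        simp only [hDm, Matrix.of_apply]
        exact if_neg (fun hh => hne (by omega))
    · rw [hzero i j hcase]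
      symm
      apply Finset.sum_eq_zero
      intro t _
      simp only [hDm, Matrix.of_apply]
      split
      · exact hzero i j hcase
      · rfl
  rw [hdec]
  calc cSpec2Norm (∑ t ∈ range r, Dm t) ≤ ∑ t ∈ range r, cSpec2Norm (Dm t) :=
        cSpec2Norm_sum_le _ _
    _ ≤ ∑ t ∈ range r, (Nat.choose k t : ℝ) := by
        apply Finset.sum_le_sum
        intro t _
        apply diag_norm_le _ t _ (Nat.cast_nonneg _)
        · intro i j hne
          simp only [hDm, Matrix.of_apply]
          exact if_neg hne
        · intro i j
          simp only [hDm, Matrix.of_apply]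
          split
          · rename_i hh
            have := jordan_pow_entry_bound J h2 h1 h3 k i j
            have e : (j : ℕ) - (i : ℕ) = t := by omega
            rwa [e] at this
          · simp
    _ ≤ (Nat.choose (k + r) (r - 1) : ℝ) := by
        rw [← Nat.cast_sum]
        exact_mod_cast sum_choose_le_choose k r hr


/-- For `A = S J S⁻¹` with Jordan blocks of size at most `r` and eigenvalues
of modulus at most 1, `‖A^k‖₂ ≤ C(k+r, r−1)·C_A` and `∑_{s≤k} ‖A^s‖₂ ≤ C(k+r+1, r)·C_A`. -/
theorem jordan_power_norm_bound
    (d r : ℕ) (hr : 1 ≤ r) (CA : ℝ) (hCA : 1 ≤ CA)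
    (A : Matrix (Fin d) (Fin d) ℝ) (S J : Matrix (Fin d) (Fin d) ℂ)
    (hS : IsUnit S.det)
    (hJ : IsJordanForm J r)
    (hdecomp : A.map (Complex.ofReal) = S * J * S⁻¹)
    (hnorm : cSpec2Norm S * cSpec2Norm S⁻¹ ≤ CA) :
    (∀ k : ℕ, 1 ≤ k → spec2Norm (A ^ k) ≤ (Nat.choose (k + r) (r - 1) : ℝ) * CA) ∧
    (∀ k : ℕ, (∑ s ∈ Finset.range (k + 1), spec2Norm (A ^ s)) ≤
      (Nat.choose (k + r + 1) r : ℝ) * CA) := by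
  have key : ∀ k : ℕ, spec2Norm (A ^ k) ≤ (Nat.choose (k + r) (r - 1) : ℝ) * CA := by
    intro k
    have hmap : (A ^ k).map Complex.ofReal = S * J ^ k * S⁻¹ := by
      rw [map_pow_ofReal, hdecomp, conjPowEq S J hS k]
    calc spec2Norm (A ^ k) ≤ cSpec2Norm ((A ^ k).map Complex.ofReal) :=
          spec2Norm_le_cSpec2Norm _
      _ = cSpec2Norm (S * J ^ k * S⁻¹) := by rw [hmap]
      _ ≤ cSpec2Norm (S * J ^ k) * cSpec2Norm S⁻¹ := cSpec2Norm_mul_le _ _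
      _ ≤ (cSpec2Norm S * cSpec2Norm (J ^ k)) * cSpec2Norm S⁻¹ :=
          mul_le_mul_of_nonneg_right (cSpec2Norm_mul_le _ _) (cSpec2Norm_nonneg _)
      _ = cSpec2Norm (J ^ k) * (cSpec2Norm S * cSpec2Norm S⁻¹) := by ring
      _ ≤ (Nat.choose (k + r) (r - 1) : ℝ) * CA := by
          apply mul_le_mul (jordan_pow_norm_le hr J hJ k) hnorm
            (mul_nonneg (cSpec2Norm_nonneg _) (cSpec2Norm_nonneg _)) (Nat.cast_nonneg _)
  constructor
  · exact fun k _ => key k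
  · intro k
    have hCA0 : (0:ℝ) ≤ CA := le_trans zero_le_one hCA
    calc (∑ s ∈ Finset.range (k + 1), spec2Norm (A ^ s))
        ≤ ∑ s ∈ Finset.range (k + 1), (Nat.choose (s + r) (r - 1) : ℝ) * CA :=
          Finset.sum_le_sum fun s _ => key s
      _ = ((∑ s ∈ Finset.range (k + 1), Nat.choose (s + r) (r - 1) : ℕ) : ℝ) * CA := by
          rw [← Finset.sum_mul, Nat.cast_sum]
      _ ≤ (Nat.choose (k + r + 1) r : ℝ) * CA := by
          apply mul_le_mul_of_nonneg_right _ hCA0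
          exact_mod_cast sum_shift_choose_le k r hr
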